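/- Fix α > 0. Then the function θ ↦ ρ_θ(α), defined on (0, π/2] by ρ_θ(α) := ‖exp(Q) − I‖ for any Q ∈ M₂(ℝ) realizing the pair (α, θ), is strictly decreasing in θ. Moreover ρ_{π/2}(α) = e^α − 1, and consequently ρ_θ(α) > α for every θ ∈ (0, π/2]. -/

import Mathlib

open Set Real
open scoped RealInnerProductSpace

/-- The Euclidean plane. -/
abbrev E2 : Type := EuclideanSpace ℝ (Fin 2)

/-- Continuous linear endomorphisms of the Euclidean plane
(2×2 real matrices with the operator norm). -/
abbrev M2 : Type := E2 →L[ℝ] E2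

/-- The angle in `[0, π/2]` between the lines `ℝu` and `ℝv` in the Euclidean plane. -/
noncomputable def lineAngle (u v : E2) : ℝ := Real.arccos (|⟪u, v⟫| / (‖u‖ * ‖v‖))

/-- `Q` realizes the pair `(α, θ)`: it has eigenvalues `α` and `-α`, and the angle
between the corresponding eigenlines is exactly `θ`. -/
def Realizes (Q : M2) (α θ : ℝ) : Prop :=
  ∃ u v : E2, u ≠ 0 ∧ v ≠ 0 ∧ Q u = α • u ∧ Q v = (-α) • v ∧ lineAngle u v = θ

/-! ### Auxiliary material -/

open Nat in
lemma exp_eigen (Q : M2) (u : E2) (c : ℝ) (h : Q u = c • u) :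
    NormedSpace.exp Q u = Real.exp c • u := by
  have hpow : ∀ n : ℕ, (Q ^ n) u = c ^ n • u := by
    intro n
    induction n with
    | zero => simp
    | succ n ih =>
      rw [pow_succ]
      have h0 : (Q ^ n * Q) u = (Q ^ n) (Q u) := rfl
      rw [h0, h, map_smul, ih, smul_smul, pow_succ]
      ring_nf
  have hsum : Summable fun n : ℕ => ((n ! : ℝ)⁻¹) • Q ^ n :=
    NormedSpace.expSeries_summable' (𝕂 := ℝ) Q
  have h1 : NormedSpace.exp Q = ∑' n : ℕ, ((n ! : ℝ)⁻¹) • Q ^ n := by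
    rw [NormedSpace.exp_eq_tsum ℝ]
  rw [h1]
  have h2 : (∑' n : ℕ, ((n ! : ℝ)⁻¹) • Q ^ n) u
      = ∑' n : ℕ, (((n ! : ℝ)⁻¹) • Q ^ n) u :=
    ((ContinuousLinearMap.apply ℝ E2 u).map_tsum hsum)
  rw [h2]
  have h3 : ∀ n : ℕ, (((n ! : ℝ)⁻¹) • Q ^ n) u = (((n ! : ℝ)⁻¹) * c ^ n) • u := by
    intro n
    rw [ContinuousLinearMap.smul_apply, hpow, smul_smul]
  simp_rw [h3]
  rw [Summable.tsum_smul_const]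
  · congr 1
    rw [Real.exp_eq_exp_ℝ, NormedSpace.exp_eq_tsum ℝ]
    simp [smul_eq_mul]
  · exact (NormedSpace.expSeries_summable' (𝕂 := ℝ) c).congr (by simp [smul_eq_mul])

/-- The operator norm of a `2×2` matrix `[[a, k], [0, b]]` (in an orthonormal basis). -/
noncomputable def gfun (a b k : ℝ) : ℝ :=
  (Real.sqrt (a^2+b^2+k^2 + 2*|a*b|) + Real.sqrt (a^2+b^2+k^2 - 2*|a*b|)) / 2

lemma sub_abs_nonneg (a b k : ℝ) : 0 ≤ a^2+b^2+k^2 - 2*|a*b| := by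
  have h : |a*b| = |a| * |b| := abs_mul a b
  nlinarith [sq_nonneg (|a|-|b|), sq_abs a, sq_abs b, sq_nonneg k]

lemma gfun_nonneg (a b k : ℝ) : 0 ≤ gfun a b k := by
  unfold gfun; positivity

lemma gfun_facts (a b k : ℝ) :
    a^2 ≤ (gfun a b k)^2 ∧ b^2 + k^2 ≤ (gfun a b k)^2 ∧
    ((gfun a b k)^2 - a^2) * ((gfun a b k)^2 - (b^2+k^2)) = a^2*k^2 := by
  set S := a^2+b^2+k^2 with hSdef
  have h1 : 0 ≤ S + 2*|a*b| := by positivity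
  have h2 : 0 ≤ S - 2*|a*b| := sub_abs_nonneg a b k
  set s := Real.sqrt (S + 2*|a*b|) with hs
  set t := Real.sqrt (S - 2*|a*b|) with ht
  have hs0 : 0 ≤ s := Real.sqrt_nonneg _
  have ht0 : 0 ≤ t := Real.sqrt_nonneg _
  have hs2 : s^2 = S + 2*|a*b| := Real.sq_sqrt h1
  have ht2 : t^2 = S - 2*|a*b| := Real.sq_sqrt h2
  have hg : gfun a b k = (s+t)/2 := rfl
  have hG : (gfun a b k)^2 = (S + s*t)/2 := by
    rw [hg]; linear_combination (hs2 + ht2)/4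
  have hst2 : (s*t)^2 = S^2 - 4*(a*b)^2 := by
    rw [mul_pow, hs2, ht2]
    have : |a*b|^2 = (a*b)^2 := sq_abs _
    linear_combination this * (-4)
  have hprod : ((gfun a b k)^2 - a^2) * ((gfun a b k)^2 - (b^2+k^2)) = a^2*k^2 := by
    rw [hG]
    linear_combination hst2/4 + ((S + s*t)/2) * hSdef
  have hsum : ((gfun a b k)^2 - a^2) + ((gfun a b k)^2 - (b^2+k^2)) = s*t := by
    rw [hG, hSdef]; ring
  have hst0 : 0 ≤ s*t := mul_nonneg hs0 ht0
  have hA : a^2 ≤ (gfun a b k)^2 := by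
    by_contra hc
    push_neg at hc
    have hy : 0 < (gfun a b k)^2 - (b^2+k^2) := by nlinarith
    nlinarith [mul_neg_of_neg_of_pos (show (gfun a b k)^2 - a^2 < 0 by linarith) hy,
      sq_nonneg (a*k)]
  have hB : b^2 + k^2 ≤ (gfun a b k)^2 := by
    by_contra hc
    push_neg at hc
    have hy : 0 < (gfun a b k)^2 - a^2 := by nlinarith
    nlinarith [mul_pos hy (show (0:ℝ) < (b^2+k^2) - (gfun a b k)^2 by linarith),
      sq_nonneg (a*k)]
  exact ⟨hA, hB, hprod⟩

lemma gfun_strictMono (a b : ℝ) {k1 k2 : ℝ} (h : k1^2 < k2^2) :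
    gfun a b k1 < gfun a b k2 := by
  unfold gfun
  have h2 : 0 ≤ a^2+b^2+k1^2 - 2*|a*b| := sub_abs_nonneg a b k1
  have h1 : 0 ≤ a^2+b^2+k1^2 + 2*|a*b| := by positivity
  have A := Real.sqrt_lt_sqrt h1 (by linarith : a^2+b^2+k1^2 + 2*|a*b| < a^2+b^2+k2^2 + 2*|a*b|)
  have B := Real.sqrt_lt_sqrt h2 (by linarith : a^2+b^2+k1^2 - 2*|a*b| < a^2+b^2+k2^2 - 2*|a*b|)
  linarith

lemma gfun_k_zero (a b : ℝ) (ha : 0 ≤ a) (hb : b ≤ 0) (hsum : 0 ≤ a + b) :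
    gfun a b 0 = a := by
  have h1 : |a*b| = -(a*b) := abs_of_nonpos (mul_nonpos_of_nonneg_of_nonpos ha hb)
  unfold gfun
  rw [h1, show a^2+b^2+(0:ℝ)^2 + 2*(-(a*b)) = (a-b)^2 from by ring,
    show a^2+b^2+(0:ℝ)^2 - 2*(-(a*b)) = (a+b)^2 from by ring,
    Real.sqrt_sq (by linarith), Real.sqrt_sq hsum]
  ring

lemma norm_comb (u w : E2) (hu : ⟪u, u⟫ = 1) (hw : ⟪w, w⟫ = 1) (huw : ⟪u, w⟫ = 0)
    (c d : ℝ) : ‖c • u + d • w‖^2 = c^2 + d^2 := by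
  rw [← real_inner_self_eq_norm_sq]
  have huw' : ⟪w, u⟫ = 0 := by rw [real_inner_comm]; exact huw
  simp only [inner_add_left, inner_add_right, real_inner_smul_left, real_inner_smul_right,
    hu, hw, huw, huw']
  ring

set_option maxHeartbeats 1600000 in
lemma norm_formula (M : M2) (u w : E2) (a b k : ℝ)
    (hu : ⟪u, u⟫ = 1) (hw : ⟪w, w⟫ = 1) (huw : ⟪u, w⟫ = 0)
    (hMu : M u = a • u) (hMw : M w = k • u + b • w)
    (hspan : ∀ x : E2, ∃ c d : ℝ, x = c • u + d • w) :
    ‖M‖ = gfun a b k := by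
  obtain ⟨hA, hB, hprod⟩ := gfun_facts a b k
  set g := gfun a b k with hgdef
  have hg0 : 0 ≤ g := gfun_nonneg a b k
  have hMx : ∀ c d : ℝ, M (c • u + d • w) = (a*c + k*d) • u + (b*d) • w := by
    intro c d
    rw [map_add, map_smul, map_smul, hMu, hMw]
    module
  -- upper bound
  have hle : ‖M‖ ≤ g := by
    apply ContinuousLinearMap.opNorm_le_bound _ hg0
    intro x
    obtain ⟨c, d, rfl⟩ := hspan x
    rw [hMx]
    have h1 : ‖(a*c + k*d) • u + (b*d) • w‖^2 = (a*c+k*d)^2 + (b*d)^2 :=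
      norm_comb u w hu hw huw _ _
    have h2 : ‖c • u + d • w‖^2 = c^2 + d^2 := norm_comb u w hu hw huw _ _
    have key : (a*c+k*d)^2 + (b*d)^2 ≤ g^2 * (c^2 + d^2) := by
      have hP : 0 ≤ g^2 - a^2 := by linarith
      have hQ : 0 ≤ g^2 - (b^2+k^2) := by linarith
      have expand : g^2 * (c^2 + d^2) - ((a*c+k*d)^2 + (b*d)^2)
          = (g^2 - a^2)*c^2 + (g^2 - (b^2+k^2))*d^2 - 2*(a*k)*(c*d) := by ring
      have key2 : (g^2-a^2) * ((g^2-a^2)*c^2 + (g^2-(b^2+k^2))*d^2 - 2*(a*k)*(c*d))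
          = ((g^2-a^2)*c - (a*k)*d)^2 + ((g^2-a^2)*(g^2-(b^2+k^2)) - (a*k)^2)*d^2 := by
        ring
      rcases eq_or_lt_of_le hP with hP0 | hPpos
      · have hak : a^2*k^2 = 0 := by
          rw [← hprod, ← hP0]; ring
        have hak' : a*k = 0 := by nlinarith [sq_nonneg (a*k)]
        have hz : 2*(a*k)*(c*d) = 0 := by rw [hak']; ring
        have e1 : 0 ≤ (g^2 - (b^2+k^2))*d^2 := mul_nonneg hQ (sq_nonneg d)
        have e2 : 0 ≤ (g^2 - a^2)*c^2 := mul_nonneg hP (sq_nonneg c)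
        linarith [expand]
      · have h3 : 0 ≤ (g^2-a^2) * ((g^2-a^2)*c^2 + (g^2-(b^2+k^2))*d^2 - 2*(a*k)*(c*d)) := by
          rw [key2]
          have : (g^2-a^2)*(g^2-(b^2+k^2)) - (a*k)^2 = 0 := by
            rw [hprod]; ring
          rw [this]
          nlinarith [sq_nonneg ((g^2-a^2)*c - (a*k)*d)]
        nlinarith [h3, hPpos]
    have hn1 : 0 ≤ ‖(a*c + k*d) • u + (b*d) • w‖ := norm_nonneg _
    have hn2 : 0 ≤ ‖c • u + d • w‖ := norm_nonneg _
    nlinarith [mul_nonneg hg0 hn2]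
  -- lower bound
  have hge : g ≤ ‖M‖ := by
    by_cases hcase : a*k = 0 ∧ g^2 = a^2
    · obtain ⟨hak, hga⟩ := hcase
      have hnu : ‖u‖ = 1 := by
        have : ‖u‖^2 = 1 := by rw [← real_inner_self_eq_norm_sq, hu]
        nlinarith [norm_nonneg u]
      have hMu2 : ‖M u‖^2 = a^2 := by
        rw [hMu, norm_smul, hnu]
        simp [sq_abs]
      have h1 : ‖M u‖ = g := by
        have h0 : ‖M u‖^2 = g^2 := by rw [hMu2, hga]
        nlinarith [norm_nonneg (M u)]
      calc g = ‖M u‖ := h1.symm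
        _ ≤ ‖M‖ * ‖u‖ := M.le_opNorm u
        _ = ‖M‖ := by rw [hnu, mul_one]
    · set c := a*k with hc
      set d := g^2 - a^2 with hd
      have hne : c ≠ 0 ∨ d ≠ 0 := by
        by_contra hcon
        push_neg at hcon
        exact hcase ⟨hcon.1, by have := hcon.2; rw [hd] at this; linarith [sub_eq_zero.mp this]⟩
      set x := c • u + d • w with hx
      have hnx : ‖x‖^2 = c^2 + d^2 := norm_comb u w hu hw huw c d
      have hxpos : 0 < ‖x‖ := by
        have h0 : 0 < c^2 + d^2 := by
          rcases hne with h | h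
          · have := sq_nonneg d; positivity
          · have := sq_nonneg c; positivity
        have := norm_nonneg x
        nlinarith
      have hMxn : ‖M x‖^2 = g^2 * ‖x‖^2 := by
        rw [hx, hMx, norm_comb u w hu hw huw, hnx]
        rw [hc, hd]
        linear_combination (a^2 - g^2) * hprod
      have : g * ‖x‖ ≤ ‖M‖ * ‖x‖ := by
        have h1 : ‖M x‖ = g * ‖x‖ := by
          nlinarith [norm_nonneg (M x), mul_nonneg hg0 (norm_nonneg x)]
        calc g * ‖x‖ = ‖M x‖ := h1.symm
          _ ≤ ‖M‖ * ‖x‖ := M.le_opNorm x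
      exact le_of_mul_le_mul_right this hxpos
  linarith

lemma norm_of_unit (M : M2) (u v : E2) (a b θ : ℝ)
    (hu : ⟪u, u⟫ = 1) (hv : ⟪v, v⟫ = 1)
    (hMu : M u = a • u) (hMv : M v = b • v)
    (hip : ⟪u, v⟫ = Real.cos θ) (hθ1 : 0 < θ) (hθ2 : θ ≤ π / 2) :
    ‖M‖ = gfun a b ((b - a) * (Real.cos θ / Real.sin θ)) := by
  have hsin : 0 < Real.sin θ := Real.sin_pos_of_pos_of_lt_pi hθ1
    (lt_of_le_of_lt hθ2 (by linarith [Real.pi_pos]))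
  have hpy := Real.sin_sq_add_cos_sq θ
  have hvu : ⟪v, u⟫ = Real.cos θ := by rw [real_inner_comm]; exact hip
  set w : E2 := (Real.sin θ)⁻¹ • (v - Real.cos θ • u) with hw
  have huw : ⟪u, w⟫ = 0 := by
    rw [hw]
    simp only [real_inner_smul_right, inner_sub_right, real_inner_smul_right, hip, hu]
    ring
  have hww : ⟪w, w⟫ = 1 := by
    rw [hw]
    simp only [real_inner_smul_left, real_inner_smul_right, inner_sub_left, inner_sub_right,
      hu, hv, hip, hvu]
    field_simp
    nlinarith [hpy]
  have hveq : v = Real.cos θ • u + Real.sin θ • w := by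
    rw [hw, smul_smul, mul_inv_cancel₀ (ne_of_gt hsin), one_smul]
    abel
  have hMw : M w = ((b - a) * (Real.cos θ / Real.sin θ)) • u + b • w := by
    have h1 : M w = (Real.sin θ)⁻¹ • (b • v - (Real.cos θ * a) • u) := by
      rw [hw, map_smul, map_sub, map_smul, hMv, hMu, smul_smul]
    rw [h1]
    nth_rewrite 1 [hveq]
    match_scalars <;> field_simp <;> ring
  have hwu : ⟪w, u⟫ = 0 := by rw [real_inner_comm]; exact huw
  have horth : Orthonormal ℝ ![u, w] := by
    rw [orthonormal_iff_ite]
    intro i j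
    fin_cases i <;> fin_cases j <;>
      simp only [Matrix.cons_val_zero, Matrix.cons_val_one, Matrix.head_cons] <;>
      simp [hu, hww, huw, hwu, show ‖u‖ = 1 by rw [norm_eq_sqrt_real_inner, hu, Real.sqrt_one],
        show ‖w‖ = 1 by rw [norm_eq_sqrt_real_inner, hww, Real.sqrt_one]]
  have hspan : ∀ x : E2, ∃ c d : ℝ, x = c • u + d • w := by
    have hli := horth.linearIndependent
    have hcard : Fintype.card (Fin 2) = Module.finrank ℝ E2 := by
      simp [finrank_euclideanSpace_fin]
    have htop := hli.span_eq_top_of_card_eq_finrank hcard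
    intro x
    have hx : x ∈ Submodule.span ℝ (Set.range ![u, w]) := by rw [htop]; trivial
    rw [show Set.range ![u, w] = {u, w} by
      simp [Matrix.range_cons, Matrix.range_empty, Set.pair_comm]] at hx
    obtain ⟨c, d, hcd⟩ := Submodule.mem_span_pair.mp hx
    exact ⟨c, d, hcd.symm⟩
  exact norm_formula M u w a b _ hu hww huw hMu hMw hspan

lemma norm_of_eigen (M : M2) (u v : E2) (a b θ : ℝ) (hu : u ≠ 0) (hv : v ≠ 0)
    (hMu : M u = a • u) (hMv : M v = b • v) (hθeq : lineAngle u v = θ)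
    (hθ1 : 0 < θ) (hθ2 : θ ≤ π / 2) :
    ‖M‖ = gfun a b ((b - a) * (Real.cos θ / Real.sin θ)) := by
  have hnu : 0 < ‖u‖ := norm_pos_iff.mpr hu
  have hnv : 0 < ‖v‖ := norm_pos_iff.mpr hv
  have hu'u' : ⟪‖u‖⁻¹ • u, ‖u‖⁻¹ • u⟫ = 1 := by
    rw [real_inner_smul_left, real_inner_smul_right, real_inner_self_eq_norm_sq]
    field_simp
  have hv'v' : ⟪‖v‖⁻¹ • v, ‖v‖⁻¹ • v⟫ = 1 := by
    rw [real_inner_smul_left, real_inner_smul_right, real_inner_self_eq_norm_sq]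
    field_simp
  have hMu' : M (‖u‖⁻¹ • u) = a • (‖u‖⁻¹ • u) := by rw [map_smul, hMu, smul_comm]
  have hMv' : M (‖v‖⁻¹ • v) = b • (‖v‖⁻¹ • v) := by rw [map_smul, hMv, smul_comm]
  have hCS : |⟪u, v⟫| ≤ ‖u‖ * ‖v‖ := abs_real_inner_le_norm u v
  have h0 : (0:ℝ) ≤ |⟪u, v⟫| / (‖u‖ * ‖v‖) := by positivity
  have hfrac : |⟪u, v⟫| / (‖u‖ * ‖v‖) = Real.cos θ := by
    rw [← hθeq, lineAngle, Real.cos_arccos (by linarith)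
      ((div_le_one (by positivity)).mpr hCS)]
  have hip : |⟪‖u‖⁻¹ • u, ‖v‖⁻¹ • v⟫| = Real.cos θ := by
    rw [real_inner_smul_left, real_inner_smul_right, ← hfrac]
    rw [abs_mul, abs_mul, abs_inv, abs_inv, abs_norm, abs_norm]
    field_simp
  rcases le_or_gt 0 ⟪‖u‖⁻¹ • u, ‖v‖⁻¹ • v⟫ with hsgn | hsgn
  · have hip' : ⟪‖u‖⁻¹ • u, ‖v‖⁻¹ • v⟫ = Real.cos θ := by rw [← hip, abs_of_nonneg hsgn]
    exact norm_of_unit M _ _ a b θ hu'u' hv'v' hMu' hMv' hip' hθ1 hθ2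
  · have hip' : ⟪‖u‖⁻¹ • u, -(‖v‖⁻¹ • v)⟫ = Real.cos θ := by
      rw [inner_neg_right, ← hip, abs_of_neg hsgn]
    have hvneg : ⟪-(‖v‖⁻¹ • v), -(‖v‖⁻¹ • v)⟫ = 1 := by
      rw [inner_neg_neg]; exact hv'v'
    have hMvneg : M (-(‖v‖⁻¹ • v)) = b • (-(‖v‖⁻¹ • v)) := by
      rw [map_neg, hMv', smul_neg]
    exact norm_of_unit M _ _ a b θ hu'u' hvneg hMu' hMvneg hip' hθ1 hθ2

/-- A concrete vector in the plane. -/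
noncomputable def vec2 (x y : ℝ) : E2 := (WithLp.equiv 2 (Fin 2 → ℝ)).symm ![x, y]

@[simp] lemma vec2_apply0 (x y : ℝ) : vec2 x y 0 = x := rfl
@[simp] lemma vec2_apply1 (x y : ℝ) : vec2 x y 1 = y := rfl

/-- A concrete 2×2 matrix as a continuous linear map. -/
noncomputable def matCLM (p q r s : ℝ) : M2 :=
  LinearMap.toContinuousLinearMap
  { toFun := fun x => vec2 (p * x 0 + q * x 1) (r * x 0 + s * x 1)
    map_add' := by
      intro x y
      ext i
      fin_cases i <;> simp [PiLp.add_apply] <;> ring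
    map_smul' := by
      intro c x
      ext i
      fin_cases i <;> simp [PiLp.smul_apply, smul_eq_mul] <;> ring }

@[simp] lemma matCLM_apply (p q r s : ℝ) (x : E2) :
    matCLM p q r s x = vec2 (p * x 0 + q * x 1) (r * x 0 + s * x 1) := rfl

lemma vec2_inner (x y x' y' : ℝ) : ⟪vec2 x y, vec2 x' y'⟫ = x * x' + y * y' := by
  simp [PiLp.inner_apply, Fin.sum_univ_two, RCLike.inner_apply, vec2]
  ring

lemma vec2_norm (x y : ℝ) : ‖vec2 x y‖ = Real.sqrt (x^2 + y^2) := by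
  rw [EuclideanSpace.norm_eq]
  simp [Fin.sum_univ_two, sq_abs]

lemma exists_realizes (α θ : ℝ) (hθ1 : 0 < θ) (hθ2 : θ ≤ π / 2) :
    ∃ Q : M2, Realizes Q α θ := by
  have hsin : 0 < Real.sin θ := Real.sin_pos_of_pos_of_lt_pi hθ1
    (lt_of_le_of_lt hθ2 (by linarith [Real.pi_pos]))
  have hcos : 0 ≤ Real.cos θ := Real.cos_nonneg_of_mem_Icc ⟨by linarith, hθ2⟩
  refine ⟨matCLM α (-2*α*(Real.cos θ / Real.sin θ)) 0 (-α),
    vec2 1 0, vec2 (Real.cos θ) (Real.sin θ), ?_, ?_, ?_, ?_, ?_⟩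
  · intro h
    have : (vec2 1 0) 0 = (0 : E2) 0 := by rw [h]
    simp at this
  · intro h
    have : (vec2 (Real.cos θ) (Real.sin θ)) 1 = (0 : E2) 1 := by rw [h]
    simp at this
    linarith
  · ext i
    fin_cases i <;> simp [PiLp.smul_apply, smul_eq_mul]
  · ext i
    fin_cases i <;>
      simp [PiLp.smul_apply, smul_eq_mul] <;>
      field_simp <;>
      ring
  · rw [lineAngle, vec2_inner, vec2_norm, vec2_norm]
    have h1 : Real.sqrt (1^2 + 0^2) = 1 := by norm_num
    have h2 : Real.sqrt (Real.cos θ^2 + Real.sin θ^2) = 1 := by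
      rw [show Real.cos θ^2 + Real.sin θ^2 = 1 by
        have := Real.sin_sq_add_cos_sq θ; linarith]
      exact Real.sqrt_one
    rw [h1, h2]
    norm_num
    rw [abs_of_nonneg hcos]
    exact Real.arccos_cos (by linarith) (by linarith [Real.pi_pos])

/-- For fixed `α > 0`, the function `θ ↦ ρ_θ(α) = ‖exp(Q) − I‖` (for `Q` realizing
`(α, θ)`) is strictly decreasing on `(0, π/2]`, equals `e^α − 1` at `θ = π/2`, and is
everywhere greater than `α`. -/
theorem rho_strictAnti_in_theta (α : ℝ) (hα : 0 < α) :
    ∃ ρ : ℝ → ℝ,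
      (∀ θ ∈ Set.Ioc (0 : ℝ) (π / 2), ∃ Q : M2, Realizes Q α θ) ∧
      (∀ θ ∈ Set.Ioc (0 : ℝ) (π / 2), ∀ Q : M2, Realizes Q α θ →
        ρ θ = ‖NormedSpace.exp Q - 1‖) ∧
      StrictAntiOn ρ (Set.Ioc 0 (π / 2)) ∧
      ρ (π / 2) = Real.exp α - 1 ∧
      (∀ θ ∈ Set.Ioc (0 : ℝ) (π / 2), α < ρ θ) := by
  set a : ℝ := Real.exp α - 1 with hadef
  set b : ℝ := Real.exp (-α) - 1 with hbdef
  have hexp : α + 1 < Real.exp α := by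
    have := Real.add_one_lt_exp (ne_of_gt hα)
    linarith
  have ha : 0 < a := by rw [hadef]; linarith
  have hb : b < 0 := by
    rw [hbdef]
    have h1 : Real.exp (-α) < Real.exp 0 := Real.exp_lt_exp.mpr (by linarith)
    rw [Real.exp_zero] at h1
    linarith
  have hprodexp : Real.exp α * Real.exp (-α) = 1 := by
    rw [← Real.exp_add]; simp
  have hab : 0 ≤ a + b := by
    rw [hadef, hbdef]
    nlinarith [sq_nonneg (Real.exp α - 1), Real.exp_pos α]
  refine ⟨fun θ => gfun a b ((b - a) * (Real.cos θ / Real.sin θ)), ?_, ?_, ?_, ?_, ?_⟩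
  · intro θ hθ
    exact exists_realizes α θ hθ.1 hθ.2
  · rintro θ hθ Q ⟨u, v, hu, hv, hQu, hQv, hangle⟩
    have hMu : (NormedSpace.exp Q - 1) u = a • u := by
      have h1 : (NormedSpace.exp Q - 1) u = NormedSpace.exp Q u - u := rfl
      rw [h1, exp_eigen Q u α hQu, hadef, sub_smul, one_smul]
    have hMv : (NormedSpace.exp Q - 1) v = b • v := by
      have h1 : (NormedSpace.exp Q - 1) v = NormedSpace.exp Q v - v := rfl
      rw [h1, exp_eigen Q v (-α) hQv, hbdef, sub_smul, one_smul]
    exact (norm_of_eigen _ u v a b θ hu hv hMu hMv hangle hθ.1 hθ.2).symm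
  · intro θ1 hθ1 θ2 hθ2 hlt
    apply gfun_strictMono
    have hsin1 : 0 < Real.sin θ1 := Real.sin_pos_of_pos_of_lt_pi hθ1.1
      (lt_of_le_of_lt hθ1.2 (by linarith [Real.pi_pos]))
    have hsin2 : 0 < Real.sin θ2 := Real.sin_pos_of_pos_of_lt_pi hθ2.1
      (lt_of_le_of_lt hθ2.2 (by linarith [Real.pi_pos]))
    have hcos2 : 0 ≤ Real.cos θ2 := Real.cos_nonneg_of_mem_Icc ⟨by linarith [hθ2.1, Real.pi_pos], hθ2.2⟩
    have hsindiff : 0 < Real.sin (θ2 - θ1) := Real.sin_pos_of_pos_of_lt_pi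
      (by linarith) (by linarith [hθ1.1, hθ2.2, Real.pi_pos])
    rw [Real.sin_sub] at hsindiff
    have hcot : Real.cos θ2 / Real.sin θ2 < Real.cos θ1 / Real.sin θ1 := by
      rw [div_lt_div_iff₀ hsin2 hsin1]
      nlinarith
    have hcot2 : 0 ≤ Real.cos θ2 / Real.sin θ2 := div_nonneg hcos2 (le_of_lt hsin2)
    have hba : b - a < 0 := by linarith
    have hsq : (Real.cos θ2 / Real.sin θ2)^2 < (Real.cos θ1 / Real.sin θ1)^2 := by
      nlinarith
    calc ((b - a) * (Real.cos θ2 / Real.sin θ2))^2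
        = (b-a)^2 * (Real.cos θ2 / Real.sin θ2)^2 := by ring
      _ < (b-a)^2 * (Real.cos θ1 / Real.sin θ1)^2 := by
          apply mul_lt_mul_of_pos_left hsq
          nlinarith [hba]
      _ = ((b - a) * (Real.cos θ1 / Real.sin θ1))^2 := by ring
  · show gfun a b ((b - a) * (Real.cos (π/2) / Real.sin (π/2))) = a
    rw [Real.cos_pi_div_two]
    rw [show (b - a) * ((0:ℝ) / Real.sin (π/2)) = 0 by simp]
    rw [gfun_k_zero a b (le_of_lt ha) (le_of_lt hb) hab]
  · intro θ hθ
    obtain ⟨hA, _, _⟩ := gfun_facts a b ((b - a) * (Real.cos θ / Real.sin θ))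
    have hg0 := gfun_nonneg a b ((b - a) * (Real.cos θ / Real.sin θ))
    nlinarith
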